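/- arXiv:1810.07825 — 2 statements merged into one kernel-verified Lean document; each statement's English description precedes it below -/
import Mathlib

section
/- If G is a planar graph and X is a cutset of G such that G − X has at least three connected components, each of which contains a vertex adjacent to every vertex of X, and |X| ≥ 3, then G contains a K_{3,3} minor; hence no such configuration exists in a planar graph. -/
open SimpleGraph

/-- `X` is a cutset of `G`: deleting `X` disconnects the remaining graph. -/
def IsCutset {V : Type*} (G : SimpleGraph V) (X : Set V) : Prop :=
  ¬ (G.induce Xᶜ).Connected

/-- `G` has an `H`-minor, witnessed by branch sets. -/
def HasMinorOf {V W : Type*} (G : SimpleGraph V) (H : SimpleGraph W) : Prop :=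
  ∃ B : W → Set V, (∀ w, (B w).Nonempty) ∧ (∀ w, (G.induce (B w)).Connected) ∧
    (Pairwise fun w w' => Disjoint (B w) (B w')) ∧
    ∀ w w', H.Adj w w' → ∃ u ∈ B w, ∃ v ∈ B w', G.Adj u v

/-- Planarity, via Wagner's characterization: no `K₅` minor and no `K₃,₃` minor. -/
def IsPlanar {V : Type*} (G : SimpleGraph V) : Prop :=
  ¬ HasMinorOf G (completeGraph (Fin 5)) ∧
  ¬ HasMinorOf G (completeBipartiteGraph (Fin 3) (Fin 3))

lemma singleton_induce_connected {V : Type*} (G : SimpleGraph V) (a : V) :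
    (G.induce {a}).Connected := by
  haveI : Nonempty ({a} : Set V) := ⟨⟨a, rfl⟩⟩
  exact ⟨fun u v => by rw [Subsingleton.elim u v]⟩

/-- if `G − X` has at least three components, each containing a
vertex adjacent to every vertex of `X`, and `|X| ≥ 3`, then `G` has a `K₃,₃`
minor; hence no such configuration exists in a planar graph. -/
theorem k33_minor_of_three_components {V : Type*} [Fintype V] (G : SimpleGraph V)
    (X : Set V) (hX : 3 ≤ X.ncard) (hcut : IsCutset G X)
    (hcomp : 3 ≤ Nat.card (G.induce Xᶜ).ConnectedComponent)
    (hadj : ∀ C : (G.induce Xᶜ).ConnectedComponent,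
      ∃ v : ↑Xᶜ, (G.induce Xᶜ).connectedComponentMk v = C ∧ ∀ x ∈ X, G.Adj (↑v) x) :
    HasMinorOf G (completeBipartiteGraph (Fin 3) (Fin 3)) ∧ ¬ IsPlanar G := by
  classical
  obtain ⟨a, ha, b, hb, c, hc, hab, hac, hbc⟩ :=
    (Set.two_lt_ncard (Set.toFinite X)).mp (by omega)
  have hcard : 2 < (Set.univ : Set (G.induce Xᶜ).ConnectedComponent).ncard := by
    rw [Set.ncard_univ]; omega
  obtain ⟨C₀, -, C₁, -, C₂, -, h01, h02, h12⟩ :=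
    (Set.two_lt_ncard (Set.toFinite _)).mp hcard
  obtain ⟨v₀, hv₀, hv₀adj⟩ := hadj C₀
  obtain ⟨v₁, hv₁, hv₁adj⟩ := hadj C₁
  obtain ⟨v₂, hv₂, hv₂adj⟩ := hadj C₂
  set vv : Fin 3 → ↑Xᶜ := ![v₀, v₁, v₂] with hvv
  set xx : Fin 3 → V := ![a, b, c] with hxx
  set f : Fin 3 ⊕ Fin 3 → V := Sum.elim xx (fun i => (vv i : V)) with hf
  have hvX : ∀ i : Fin 3, ((vv i : V)) ∉ X := fun i => (vv i).2
  have hxX : ∀ i : Fin 3, xx i ∈ X := by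
    intro i; fin_cases i <;> assumption
  have key : ∀ i : Fin 3, (G.induce Xᶜ).connectedComponentMk (vv i) = ![C₀, C₁, C₂] i := by
    intro i; fin_cases i <;> assumption
  have hvne : ∀ i j : Fin 3, i ≠ j → (vv i : V) ≠ (vv j : V) := by
    intro i j hij h
    have h' : vv i = vv j := Subtype.coe_injective h
    have : (![C₀, C₁, C₂] i) = ![C₀, C₁, C₂] j := by rw [← key i, ← key j, h']
    fin_cases i <;> fin_cases j <;> simp_all
  have hxne : ∀ i j : Fin 3, i ≠ j → xx i ≠ xx j := by
    intro i j hij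
    fin_cases i <;> fin_cases j <;> simp_all [hxx] <;> tauto
  have hfinj : Function.Injective f := by
    rintro (i | i) (j | j) h <;>
      simp only [hf, Sum.elim_inl, Sum.elim_inr] at h
    · by_contra hne
      exact hxne i j (by simpa using hne) h
    · exact absurd (h ▸ hxX i) (hvX j)
    · exact absurd (h.symm ▸ hxX j) (hvX i)
    · by_contra hne
      exact hvne i j (by simpa using hne) h
  have hadj' : ∀ i j : Fin 3, G.Adj (vv j : V) (xx i) := by
    intro i j
    fin_cases j
    · exact hv₀adj _ (hxX i)
    · exact hv₁adj _ (hxX i)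
    · exact hv₂adj _ (hxX i)
  have hminor : HasMinorOf G (completeBipartiteGraph (Fin 3) (Fin 3)) := by
    refine ⟨fun w => {f w}, fun w => ⟨f w, rfl⟩, fun w => singleton_induce_connected G _,
      fun w w' hww' => Set.disjoint_singleton.mpr fun h => hww' (hfinj h), ?_⟩
    rintro (i | i) (j | j) hij <;> simp only [completeBipartiteGraph] at hij
    · simp at hij
    · exact ⟨f (Sum.inl i), rfl, f (Sum.inr j), rfl, (hadj' i j).symm⟩
    · exact ⟨f (Sum.inr i), rfl, f (Sum.inl j), rfl, hadj' j i⟩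
    · simp at hij
  exact ⟨hminor, fun hP => hP.2 hminor⟩
end

section
/- Let G be a 3-connected plane graph and let X = {x, y, z} be three vertices of G that are all incident to a common face f. Then X is not a 3-cutset of G. -/
open SimpleGraph

/-- `G` is 3-connected: at least 4 vertices, and removing fewer than 3 vertices
leaves the graph connected. -/
def ThreeConnected {V : Type*} [Fintype V] (G : SimpleGraph V) : Prop :=
  4 ≤ Fintype.card V ∧ ∀ X : Set V, X.ncard < 3 → (G.induce Xᶜ).Connected

section AuxLemmas

variable {V : Type*}

/-- A connected graph on a finite vertex type has at least `card V - 1` edges. -/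
private lemma aux_card_le_edges [Fintype V] (G : SimpleGraph V)
    (h : G.Connected) : Fintype.card V ≤ G.edgeSet.ncard + 1 := by
  classical
  obtain ⟨v₀⟩ := h.nonempty
  have key : ∀ w : V, w ≠ v₀ → ∃ w' : V, G.Adj w w' ∧ G.dist w v₀ = G.dist w' v₀ + 1 := by
    intro w hw
    have hd : G.dist w v₀ ≠ 0 := by
      rw [SimpleGraph.dist_ne_zero_iff_ne_and_reachable]
      exact ⟨hw, h.preconnected w v₀⟩
    obtain ⟨p, hp⟩ := SimpleGraph.exists_walk_of_dist_ne_zero hd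
    have hnil : ¬ p.Nil := by
      intro hn
      rw [SimpleGraph.Walk.nil_iff_length_eq] at hn
      omega
    refine ⟨p.getVert 1, p.adj_snd hnil, ?_⟩
    have h1 : G.dist (p.getVert 1) v₀ ≤ p.tail.length := SimpleGraph.dist_le _
    have h2 : p.tail.length + 1 = p.length := SimpleGraph.Walk.length_tail_add_one hnil
    have h3 : G.dist w v₀ ≤ 1 + G.dist (p.getVert 1) v₀ := by
      calc G.dist w v₀ ≤ G.dist w (p.getVert 1) + G.dist (p.getVert 1) v₀ := h.dist_triangle
        _ ≤ 1 + G.dist (p.getVert 1) v₀ := by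
            have : G.dist w (p.getVert 1) = 1 := SimpleGraph.dist_eq_one_iff_adj.mpr (p.adj_snd hnil)
            omega
    omega
  choose f hf1 hf2 using key
  have hinj : Set.InjOn (fun w => if hw : w ≠ v₀ then s(w, f w hw) else s(w, w)) {w | w ≠ v₀} := by
    intro a ha b hb hab
    simp only [Set.mem_setOf_eq] at ha hb
    simp only [dif_pos ha, dif_pos hb, Sym2.eq, Sym2.rel_iff', Prod.mk.injEq,
      Prod.swap_prod_mk] at hab
    rcases hab with ⟨h1, _⟩ | ⟨h1, h2⟩
    · exact h1
    · exfalso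
      have d1 := hf2 a ha
      have d2 := hf2 b hb
      have e1 : G.dist a v₀ = G.dist b v₀ + 1 := by
        rw [d1, h2]
      have e2 : G.dist b v₀ = G.dist a v₀ + 1 := by
        rw [d2, ← h1]
      omega
  have hmem : ∀ a ∈ {w | w ≠ v₀},
      (fun w => if hw : w ≠ v₀ then s(w, f w hw) else s(w, w)) a ∈ G.edgeSet := by
    intro a ha
    simp only [Set.mem_setOf_eq] at ha
    simp only [dif_pos ha]
    exact hf1 a ha
  have hle : ({w | w ≠ v₀} : Set V).ncard ≤ G.edgeSet.ncard :=
    Set.ncard_le_ncard_of_injOn _ hmem hinj (Set.toFinite _)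
  have : ({w | w ≠ v₀} : Set V).ncard + 1 = Fintype.card V := by
    have h4 : ({w | w ≠ v₀} : Set V) = {v₀}ᶜ := by ext w; simp
    rw [h4]
    have h5 := Set.ncard_add_ncard_compl ({v₀} : Set V)
    rw [Set.ncard_singleton] at h5
    rw [Nat.card_eq_fintype_card] at h5
    omega
  omega

/-- In a path, the only edge containing the initial vertex is the first edge. -/
private lemma aux_path_edge_start {G : SimpleGraph V} :
    ∀ {a b : V} (p : G.Walk a b), p.IsPath → ∀ e ∈ p.edges, a ∈ e → e = s(a, p.getVert 1) := by
  intro a b p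
  induction p with
  | nil => intro _ e he _; simp at he
  | cons h q ih =>
    intro hp e he ha
    rw [SimpleGraph.Walk.edges_cons, List.mem_cons] at he
    rcases he with rfl | he
    · simp [SimpleGraph.Walk.getVert_cons_succ, SimpleGraph.Walk.getVert_zero]
    · exfalso
      rw [SimpleGraph.Walk.cons_isPath_iff] at hp
      induction e with
      | h x y =>
        rw [Sym2.mem_iff] at ha
        rcases ha with rfl | rfl
        · exact hp.2 (q.fst_mem_support_of_mem_edges he)
        · exact hp.2 (q.snd_mem_support_of_mem_edges he)

/-- Every vertex of a cycle lies on exactly two edges of the cycle. -/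
private lemma aux_cycle_degree [DecidableEq V] {G : SimpleGraph V} {u : V}
    (c : G.Walk u u) (hc : c.IsCycle) {k : V} (hk : k ∈ c.support) :
    (c.edges.toFinset.filter (fun e => k ∈ e)).card = 2 := by
  classical
  have hrot : (c.rotate k hk).edges.toFinset = c.edges.toFinset :=
    List.toFinset_eq_of_perm _ _ (c.rotate_edges k hk).perm
  rw [← hrot]
  have hc' : (c.rotate k hk).IsCycle := hc.rotate hk
  generalize hcc : c.rotate k hk = c' at hc'
  clear hrot hcc hk hc c
  have h3 := hc'.three_le_length
  cases c' with
  | nil => exact absurd rfl hc'.ne_nil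
  | @cons _ w _ h p =>
    rw [SimpleGraph.Walk.cons_isCycle_iff] at hc'
    obtain ⟨hp, he⟩ := hc'
    have hlen : 2 ≤ p.length := by
      simp only [SimpleGraph.Walk.length_cons] at h3
      omega
    have hq : ¬ p.reverse.Nil := by
      rw [SimpleGraph.Walk.nil_iff_length_eq, SimpleGraph.Walk.length_reverse]
      omega
    set m := p.reverse.getVert 1 with hm
    have hmem : s(k, m) ∈ p.edges := by
      have h1 : s(k, m) ∈ p.reverse.edges := by
        obtain ⟨v', h', q', hq'⟩ := SimpleGraph.Walk.not_nil_iff.mp hq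
        rw [hm, hq']
        simp
      rwa [SimpleGraph.Walk.edges_reverse, List.mem_reverse] at h1
    have huniq : ∀ e ∈ p.edges, k ∈ e → e = s(k, m) :=
      fun e hep hke => aux_path_edge_start p.reverse (hp.reverse) e
        (by rwa [SimpleGraph.Walk.edges_reverse, List.mem_reverse]) hke
    have hfilter : (SimpleGraph.Walk.cons h p).edges.toFinset.filter (fun e => k ∈ e)
        = {s(k, w), s(k, m)} := by
      ext e
      simp only [Finset.mem_filter, List.mem_toFinset, SimpleGraph.Walk.edges_cons,
        List.mem_cons, Finset.mem_insert, Finset.mem_singleton]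
      constructor
      · rintro ⟨rfl | hep, hke⟩
        · exact Or.inl rfl
        · exact Or.inr (huniq e hep hke)
      · rintro (rfl | rfl)
        · exact ⟨Or.inl rfl, by simp⟩
        · exact ⟨Or.inr hmem, by simp⟩
    rw [hfilter]
    rw [Finset.card_insert_of_notMem, Finset.card_singleton]
    simp only [Finset.mem_singleton]
    intro hcontra
    rw [hcontra] at he
    exact he hmem

/-- Walking in an induced subgraph cannot leave a set `K` closed under adjacency. -/
private lemma aux_walk_closed {G : SimpleGraph V} {s : Set V} (K : Set V)
    (hclose : ∀ w ∈ K, ∀ n, G.Adj w n → n ∈ s → n ∈ K) :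
    ∀ {a b : ↥s} (_ : (G.induce s).Walk a b), ↑a ∈ K → ↑b ∈ K := by
  intro a b p
  induction p with
  | nil => exact id
  | @cons a a' b h q ih =>
    intro ha
    exact ih (hclose _ ha _ (by simpa using h) a'.2)

/-- A walk inside an induced subgraph whose support stays in a closed set `K`
transfers to reachability in the subgraph induced by `K`. -/
private lemma aux_walk_transfer {G : SimpleGraph V} {s : Set V} (K : Set V)
    (hclose : ∀ w ∈ K, ∀ n, G.Adj w n → n ∈ s → n ∈ K) :
    ∀ {a b : ↥s} (_ : (G.induce s).Walk a b) (ha : ↑a ∈ K) (hb : ↑b ∈ K),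
      (G.induce K).Reachable ⟨↑a, ha⟩ ⟨↑b, hb⟩ := by
  intro a b p
  induction p with
  | nil => intro ha hb; exact Reachable.refl _
  | @cons a a' b h q ih =>
    intro ha hb
    have ha' : ↑a' ∈ K := hclose _ ha _ (by simpa using h) a'.2
    have hadj : (G.induce K).Adj ⟨↑a, ha⟩ ⟨↑a', ha'⟩ := by simpa using h
    exact hadj.reachable.trans (ih ha' hb)

end AuxLemmas

/-- in a 3-connected plane graph, three vertices incident to a
common face are not a 3-cutset.  (By Tutte's theorem, the faces of a
3-connected plane graph are exactly its induced non-separating cycles, so the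
face `f` is encoded as an induced cycle `c` whose complement induces a
connected subgraph, with `x`, `y`, `z` on `c`.) -/
theorem cofacial_triple_not_cutset {V : Type*} [Fintype V] [DecidableEq V]
    (G : SimpleGraph V) (hG : ThreeConnected G) (hpl : IsPlanar G)
    (u : V) (c : G.Walk u u) (hc : c.IsCycle)
    (hind : ∀ a ∈ c.support, ∀ b ∈ c.support, G.Adj a b → s(a, b) ∈ c.edges)
    (hns : (G.induce {v : V | v ∉ c.support}).Connected)
    (x y z : V) (hx : x ∈ c.support) (hy : y ∈ c.support) (hz : z ∈ c.support) :
    ¬ IsCutset G {x, y, z} := by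
  classical
  rw [IsCutset, not_not]
  set X : Set V := {x, y, z} with hXdef
  have hXsub : ∀ a ∈ X, a ∈ c.support := by
    rintro a (rfl | rfl | rfl) <;> assumption
  set T : Set V := {v : V | v ∉ c.support} with hTdef
  have hTX : T ⊆ Xᶜ := fun v hv hvX => hv (hXsub v hvX)
  obtain ⟨t₀s⟩ := hns.nonempty
  obtain ⟨t₀, ht₀⟩ := t₀s
  have ht₀X : t₀ ∈ Xᶜ := hTX ht₀
  have hTreach : ∀ (a b : V) (ha : a ∈ T) (hb : b ∈ T),
      (G.induce Xᶜ).Reachable ⟨a, hTX ha⟩ ⟨b, hTX hb⟩ := by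
    intro a b ha hb
    have h := hns.preconnected ⟨a, ha⟩ ⟨b, hb⟩
    exact h.map (G.induceHomOfLE hTX).toHom
  have key : ∀ (v : V) (hv : v ∈ Xᶜ), v ∈ c.support →
      ∃ (t : V) (ht : t ∈ T), (G.induce Xᶜ).Reachable ⟨v, hv⟩ ⟨t, hTX ht⟩ := by
    intro v hv hvs
    by_contra hno
    push_neg at hno
    set K : Set V := {w | ∃ hw : w ∈ Xᶜ, (G.induce Xᶜ).Reachable ⟨v, hv⟩ ⟨w, hw⟩} with hKdef
    have hvK : v ∈ K := ⟨hv, Reachable.refl _⟩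
    have hKX : K ⊆ Xᶜ := fun w hw => hw.1
    have hKS : ∀ w ∈ K, w ∈ c.support := by
      intro w hw
      by_contra hws
      obtain ⟨hw1, hw2⟩ := hw
      exact hno w hws (by convert hw2)
    have hclose : ∀ w ∈ K, ∀ n, G.Adj w n → n ∈ Xᶜ → n ∈ K := by
      intro w hw n hadj hn
      obtain ⟨hw1, hw2⟩ := hw
      refine ⟨hn, hw2.trans (Adj.reachable ?_)⟩
      simpa using hadj
    have hKconn : (G.induce K).Connected := by
      rw [connected_iff_exists_forall_reachable]
      refine ⟨⟨v, hvK⟩, ?_⟩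
      rintro ⟨w, hw⟩
      obtain ⟨hw1, hw2⟩ := hw
      obtain ⟨p⟩ := hw2
      exact aux_walk_transfer K hclose p hvK ⟨hw1, ⟨p⟩⟩
    set Kf : Finset V := K.toFinset with hKfdef
    set Ec : Finset (Sym2 V) := c.edges.toFinset with hEcdef
    set IE : Finset (Sym2 V) := Ec.filter (fun e => ∀ a ∈ e, a ∈ K) with hIEdef
    set BE : Finset (Sym2 V) := Ec.filter (fun e => ¬(∀ a ∈ e, a ∈ K) ∧ ∃ a ∈ e, a ∈ K)
      with hBEdef
    have hKfcard : Kf.card = K.ncard := by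
      rw [hKfdef, Set.ncard_eq_toFinset_card']
    have hvKf : v ∈ Kf := by rwa [hKfdef, Set.mem_toFinset]
    have hKf1 : 1 ≤ Kf.card := Finset.card_pos.mpr ⟨v, hvKf⟩
    -- |K| ≤ |IE| + 1
    have hIEbound : Kf.card ≤ IE.card + 1 := by
      have h1 : Fintype.card ↥K ≤ (G.induce K).edgeSet.ncard + 1 :=
        aux_card_le_edges _ hKconn
      have h2 : (G.induce K).edgeSet.ncard ≤ IE.card := by
        have := Set.ncard_le_ncard_of_injOn (Sym2.map (Subtype.val : ↥K → V))
          (s := (G.induce K).edgeSet) (t := (↑IE : Set (Sym2 V))) ?_ ?_ (Set.toFinite _)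
        · rwa [Set.ncard_coe_finset] at this
        · rintro e he
          induction e with
          | h a b =>
            rw [mem_edgeSet] at he
            have hab : G.Adj ↑a ↑b := by simpa using he
            simp only [Sym2.map_pair_eq, Finset.coe_filter, Set.mem_setOf_eq, hIEdef,
              Finset.mem_filter, hEcdef, List.mem_toFinset]
            refine ⟨hind _ (hKS _ a.2) _ (hKS _ b.2) hab, ?_⟩
            intro w hw
            rw [Sym2.mem_iff] at hw
            rcases hw with rfl | rfl
            · exact a.2
            · exact b.2
        · intro e1 he1 e2 he2 heq
          exact Sym2.map.injective Subtype.val_injective heq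
      have h3 : Fintype.card ↥K = K.ncard := by
        rw [Set.ncard_eq_toFinset_card', Set.toFinset_card]
      omega
    -- handshake
    have hdeg : ∀ k ∈ Kf, (Ec.filter (fun e => k ∈ e)).card = 2 := by
      intro k hk
      rw [hKfdef, Set.mem_toFinset] at hk
      exact aux_cycle_degree c hc (hKS k hk)
    have hhs : ∑ e ∈ Ec, (Kf.filter (fun k => k ∈ e)).card = 2 * Kf.card := by
      have h1 : ∑ k ∈ Kf, (Ec.filter (fun e => k ∈ e)).card = 2 * Kf.card := by
        rw [Finset.sum_congr rfl hdeg]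
        simp [mul_comm]
      rw [← h1]
      simp only [Finset.card_filter]
      rw [Finset.sum_comm]
    have hIEsum : ∑ e ∈ IE, (Kf.filter (fun k => k ∈ e)).card = 2 * IE.card := by
      rw [Finset.sum_congr rfl ?_, Finset.sum_const, smul_eq_mul, mul_comm]
      intro e he
      rw [hIEdef, Finset.mem_filter] at he
      obtain ⟨heEc, heK⟩ := he
      induction e with
      | h a b =>
        have hne : a ≠ b := by
          have : s(a, b) ∈ G.edgeSet := c.edges_subset_edgeSet
            (by rwa [hEcdef, List.mem_toFinset] at heEc)
          intro hab
          exact G.not_isDiag_of_mem_edgeSet this (by simp [hab])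
        have hKfe : Kf.filter (fun k => k ∈ s(a, b)) = {a, b} := by
          ext w
          simp only [Finset.mem_filter, Sym2.mem_iff, Finset.mem_insert, Finset.mem_singleton,
            hKfdef, Set.mem_toFinset]
          constructor
          · rintro ⟨_, h⟩; exact h
          · rintro (rfl | rfl)
            · exact ⟨heK _ (by simp), Or.inl rfl⟩
            · exact ⟨heK _ (by simp), Or.inr rfl⟩
        rw [hKfe, Finset.card_insert_of_notMem (by simpa using hne), Finset.card_singleton]
    -- BE is small
    have hBEbound : BE.card ≤ 2 := by
      have hsub : BE ⊆ Ec.filter (fun e => ¬(∀ a ∈ e, a ∈ K)) := by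
        intro e he
        rw [hBEdef, Finset.mem_filter] at he
        rw [Finset.mem_filter]
        exact ⟨he.1, he.2.1⟩
      have h1 : BE.card ≤ ∑ e ∈ BE, (Kf.filter (fun k => k ∈ e)).card := by
        rw [Finset.card_eq_sum_ones]
        apply Finset.sum_le_sum
        intro e he
        rw [hBEdef, Finset.mem_filter] at he
        obtain ⟨-, -, a, hae, haK⟩ := he
        refine Nat.one_le_iff_ne_zero.mpr (Finset.card_ne_zero.mpr ⟨a, ?_⟩)
        rw [Finset.mem_filter, hKfdef, Set.mem_toFinset]
        exact ⟨haK, hae⟩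
      have h2 : ∑ e ∈ BE, (Kf.filter (fun k => k ∈ e)).card
          ≤ ∑ e ∈ Ec.filter (fun e => ¬(∀ a ∈ e, a ∈ K)), (Kf.filter (fun k => k ∈ e)).card :=
        Finset.sum_le_sum_of_subset hsub
      have h3 : ∑ e ∈ Ec.filter (fun e => ∀ a ∈ e, a ∈ K), (Kf.filter (fun k => k ∈ e)).card
          + ∑ e ∈ Ec.filter (fun e => ¬(∀ a ∈ e, a ∈ K)), (Kf.filter (fun k => k ∈ e)).card
          = ∑ e ∈ Ec, (Kf.filter (fun k => k ∈ e)).card :=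
        Finset.sum_filter_add_sum_filter_not _ _ _
      rw [hhs] at h3
      rw [← hIEdef] at h3
      rw [hIEsum] at h3
      omega
    -- the attachment set D
    set D : Set V := {d | d ∈ X ∧ ∃ k ∈ K, G.Adj d k} with hDdef
    have hDX : D ⊆ X := fun d hd => hd.1
    have hDcard : D.ncard ≤ 2 := by
      have hchoice : ∀ d ∈ D, ∃ k, k ∈ K ∧ G.Adj d k := by
        intro d hd
        obtain ⟨-, k, hk1, hk2⟩ := hd
        exact ⟨k, hk1, hk2⟩
      choose! kfun hk1 hk2 using hchoice
      have hmain := Set.ncard_le_ncard_of_injOn (fun d => s(d, kfun d)) (s := D)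
        (t := (↑BE : Set (Sym2 V))) ?_ ?_ (Set.toFinite _)
      · rw [Set.ncard_coe_finset] at hmain
        omega
      · intro d hd
        have hkK := hk1 d hd
        have hadj := hk2 d hd
        simp only [hBEdef, Finset.coe_filter, Set.mem_setOf_eq, hEcdef, List.mem_toFinset]
        refine ⟨hind d (hXsub d (hDX hd)) _ (hKS _ hkK) hadj, ?_, ?_⟩
        · intro hall
          exact (hKX (hall d (by simp))) (hDX hd)
        · exact ⟨kfun d, by simp, hkK⟩
      · intro d1 hd1 d2 hd2 heq
        by_contra hne
        have heq' : s(d1, kfun d1) = s(d2, kfun d2) := heq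
        have hmem2 : d2 ∈ s(d1, kfun d1) := by
          rw [heq']; simp
        rw [Sym2.mem_iff] at hmem2
        rcases hmem2 with hcase | hcase
        · exact hne hcase.symm
        · exact (hKX (hcase ▸ hk1 d1 hd1)) (hDX hd2)
    have hD3 : D.ncard < 3 := by omega
    have hDconn := hG.2 D hD3
    have hvD : v ∈ Dᶜ := fun hvD => hv (hDX hvD)
    have ht₀D : t₀ ∈ Dᶜ := fun hh => ht₀ (hXsub _ (hDX hh))
    obtain ⟨p⟩ := hDconn.preconnected ⟨v, hvD⟩ ⟨t₀, ht₀D⟩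
    have hcloseD : ∀ w ∈ K, ∀ n, G.Adj w n → n ∈ Dᶜ → n ∈ K := by
      intro w hw n hadj hn
      by_cases hnX : n ∈ X
      · exact absurd ⟨hnX, w, hw, hadj.symm⟩ hn
      · exact hclose w hw n hadj hnX
    have hfin := aux_walk_closed K hcloseD p hvK
    exact ht₀ (hKS t₀ hfin)
  -- final assembly
  rw [connected_iff_exists_forall_reachable]
  refine ⟨⟨t₀, ht₀X⟩, ?_⟩
  rintro ⟨w, hw⟩
  by_cases hws : w ∈ c.support
  · obtain ⟨t, ht, hreach⟩ := key w hw hws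
    exact (hreach.trans (hTreach t t₀ ht ht₀)).symm
  · exact hTreach t₀ w ht₀ hws
end
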